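/- Let (I′, A′, σ) be a simply-laced folding datum, let I be the set of ⟨σ⟩-orbits, and let π: R′ → R be the folding homomorphism between the Laurent polynomial rings over ℂ in variables Y_{j,n} (j ∈ I′, n ∈ ℤ) and Y_{ī,n} (ī ∈ I, n ∈ ℤ), sending Y_{j,n} to Y_{[j],n}. For i ∈ I′ let S′^−_i : R′ → M′_i be the screening derivation built from the monomials A′_{i,n} = Y_{i,n+1}Y_{i,n−1}∏_{j≠i}Y_{j,n}^{A′_{ji}}, and for an orbit ī ∈ I let S^−_ī : R → M_ī be the screening derivation built from A_{ī,n} = Y_{ī,n+1}Y_{ī,n−1}∏_{j̄≠ī}Y_{j̄,n}^{c_{j̄ī}}, where c_{j̄ī} = Σ_{j′∈j̄}A′_{j′i} for a representative i ∈ ī. Then: (a) for each orbit ī there is a well-defined additive map p_{i′}: M′_{i′} → M_ī for each i′ ∈ ī, semilinear over π and sending ē_n to ē_n, and one has the identity of derivations S^−_ī ∘ π = Σ_{i′∈ī} p_{i′} ∘ S′^−_{i′}; (b) consequently π maps ⋂_{i∈I′} Ker S′^−_i into ⋂_{ī∈I} Ker S^−_ī. -/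

import Mathlib

/-- Exponent lattice of the Laurent polynomial ring in the variables `Y_{j,n}`. -/
abbrev LExp (J : Type) : Type := (J × ℤ) →₀ ℤ

/-- The Laurent polynomial ring over `ℂ` in the variables `Y_{j,n}`, `j ∈ J`, `n ∈ ℤ`. -/
abbrev LRing (J : Type) : Type := AddMonoidAlgebra ℂ (LExp J)

/-- The (invertible) monomial with exponent vector `v`. -/
noncomputable def Ym {J : Type} (v : LExp J) : LRing J := AddMonoidAlgebra.single v 1

/-- The exponent vector of `Y_{j,n}^k`. -/
noncomputable def E {J : Type} (j : J) (n k : ℤ) : LExp J := Finsupp.single (j, n) k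

/-- The folding ring homomorphism `π : R′ → R`, with `π(Y_{j,n}) = Y_{cl j, n}`. -/
noncomputable def foldPi {I' I : Type} (cl : I' → I) : LRing I' →+* LRing I :=
  AddMonoidAlgebra.mapDomainRingHom ℂ
    (Finsupp.mapDomain.addMonoidHom (Prod.map cl (id : ℤ → ℤ)))

/-- Exponent of `A′_{i,n} = Y_{i,n+1} Y_{i,n−1} ∏_{j≠i} Y_{j,n}^{A′_{ji}}`. -/
noncomputable def AexpSL {I' : Type} [Fintype I'] [DecidableEq I'] (A' : I' → I' → ℤ)
    (i : I') (n : ℤ) : LExp I' :=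
  E i (n + 1) 1 + E i (n - 1) 1 + ∑ j ∈ Finset.univ.erase i, E j n (A' j i)

/-- Exponent of the folded monomial
`A_{ī,n} = Y_{ī,n+1} Y_{ī,n−1} ∏_{j̄ ≠ ī} Y_{j̄,n}^{c_{j̄ ī}}`. -/
noncomputable def AexpF {I : Type} [Fintype I] [DecidableEq I] (c : I → I → ℤ)
    (ib : I) (n : ℤ) : LExp I :=
  E ib (n + 1) 1 + E ib (n - 1) 1 + ∑ jb ∈ Finset.univ.erase ib, E jb n (c jb ib)

/-- Relations submodule `e_{n+1} − A_n e_{n−1}` for a family of monomial exponents. -/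
noncomputable def scrRel {J : Type} (Av : ℤ → LExp J) :
    Submodule (LRing J) (ℤ →₀ LRing J) :=
  Submodule.span (LRing J)
    {x | ∃ n : ℤ, x =
      Finsupp.single (n + 1) (1 : LRing J) - Ym (Av n) • Finsupp.single (n - 1) (1 : LRing J)}

/-- Target module of the screening operator. -/
noncomputable abbrev ScrMod {J : Type} (Av : ℤ → LExp J) : Type :=
  (ℤ →₀ LRing J) ⧸ scrRel Av

/-- The class `ē_n` in the quotient module. -/
noncomputable def ebar {J : Type} (Av : ℤ → LExp J) (n : ℤ) : ScrMod Av :=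
  Submodule.Quotient.mk (Finsupp.single n (1 : LRing J))

lemma Eadd {J : Type} (j : J) (n a b : ℤ) : E j n a + E j n b = E j n (a + b) :=
  (Finsupp.single_add _ _ _).symm

lemma Ym_add {J : Type} (v w : LExp J) : Ym (v + w) = Ym v * Ym w := by
  simp [Ym, AddMonoidAlgebra.single_mul_single]

lemma Ym_zero {J : Type} : Ym (0 : LExp J) = 1 := by
  simp [Ym, AddMonoidAlgebra.one_def]

lemma S_one {J : Type} {Av : ℤ → LExp J} (S : LRing J →ₗ[ℂ] ScrMod Av)
    (hL : ∀ x y, S (x * y) = x • S y + y • S x) : S 1 = 0 := by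
  have := hL 1 1
  simpa using this

lemma Ym_smul_Ym_smul {J : Type} {Av : ℤ → LExp J} (v w : LExp J) (m : ScrMod Av) :
    Ym v • Ym w • m = Ym (v + w) • m := by
  rw [Ym_add, mul_smul]

lemma Ym_cancel {J : Type} {Av : ℤ → LExp J} (v : LExp J) (m : ScrMod Av) :
    Ym (-v) • Ym v • m = m := by
  rw [Ym_smul_Ym_smul, neg_add_cancel, Ym_zero, one_smul]

lemma S_Ym_pow_ne {J : Type} {Av : ℤ → LExp J} (S : LRing J →ₗ[ℂ] ScrMod Av)
    (hL : ∀ x y, S (x * y) = x • S y + y • S x) {j : J} (n : ℤ)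
    (hvj : S (Ym (E j n 1)) = 0) :
    ∀ k : ℤ, S (Ym (E j n k)) = 0 := by
  have hstep : ∀ k : ℤ, Ym (E j n (k + 1)) = Ym (E j n k) * Ym (E j n 1) := by
    intro k; rw [← Ym_add, Eadd]
  intro k
  induction k using Int.induction_on with
  | zero => show S (Ym (E j n 0)) = 0; rw [E, Finsupp.single_zero]; rw [show (0 : LExp J) = 0 from rfl] at *; rw [show Ym (0 : LExp J) = 1 from Ym_zero, S_one S hL]
  | succ k ih => rw [hstep, hL, hvj, ih, smul_zero, smul_zero, add_zero]
  | pred k ih =>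
      have hk : Ym (E j n (-(k:ℤ))) = Ym (E j n (-(k:ℤ) - 1)) * Ym (E j n 1) := by
        have := hstep (-(k:ℤ) - 1); rw [sub_add_cancel] at this; exact this
      have heq := ih
      rw [hk, hL, hvj, smul_zero, zero_add] at heq
      have h3 := congrArg (fun m => Ym (-E j n 1) • m) heq
      simpa [Ym_cancel] using h3

lemma Ym_cancelE {J : Type} {Av : ℤ → LExp J} (i : J) (n : ℤ) (m : ScrMod Av) :
    Ym (E i n (-1)) • Ym (E i n 1) • m = m := by
  rw [Ym_smul_Ym_smul, Eadd]
  norm_num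
  rw [show E i n 0 = 0 from Finsupp.single_zero _, Ym_zero, one_smul]

lemma S_Ym_pow_eq {J : Type} {Av : ℤ → LExp J} (S : LRing J →ₗ[ℂ] ScrMod Av)
    (hL : ∀ x y, S (x * y) = x • S y + y • S x) (i : J) (n : ℤ)
    (hvi : S (Ym (E i n 1)) = Ym (E i n 1) • ebar Av n) :
    ∀ k : ℤ, S (Ym (E i n k)) = k • (Ym (E i n k) • ebar Av n) := by
  have hstep : ∀ k : ℤ, Ym (E i n (k + 1)) = Ym (E i n k) * Ym (E i n 1) := by
    intro k; rw [← Ym_add, Eadd]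
  intro k
  induction k using Int.induction_on with
  | zero =>
      have h0 : E i n (0:ℤ) = 0 := Finsupp.single_zero _
      rw [h0, Ym_zero, S_one S hL, zero_smul]
  | succ k ih =>
      rw [hstep, hL, hvi, ih]
      rw [smul_comm (Ym (E i n 1)) ((k : ℤ))]
      rw [Ym_smul_Ym_smul, Ym_smul_Ym_smul, Eadd, Eadd]
      rw [add_comm (1:ℤ) (k:ℤ)]
      rw [add_smul, one_smul, hstep]
      abel
  | pred k ih =>
      have hk : Ym (E i n (-(k:ℤ))) = Ym (E i n (-(k:ℤ) - 1)) * Ym (E i n 1) := by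
        have := hstep (-(k:ℤ) - 1); rw [sub_add_cancel] at this; exact this
      have heq := ih
      rw [hk, hL, hvi, ← hk] at heq
      have h2 : Ym (E i n 1) • S (Ym (E i n (-(k:ℤ) - 1)))
          = (-(k:ℤ)) • (Ym (E i n (-(k:ℤ))) • ebar Av n)
            - Ym (E i n (-(k:ℤ) - 1)) • Ym (E i n 1) • ebar Av n := eq_sub_of_add_eq' heq
      have h3 := congrArg (fun m => Ym (E i n (-1)) • m) h2
      simp only [smul_sub, Ym_cancelE] at h3
      rw [h3]
      rw [smul_comm (Ym (E i n (-1))) (-(k:ℤ))]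
      rw [Ym_smul_Ym_smul, Eadd]
      rw [Ym_smul_Ym_smul, Eadd]
      rw [Ym_smul_Ym_smul, Eadd]
      rw [show (-1 + -(k:ℤ)) = -(k:ℤ) - 1 by ring,
          show (-1 + (-(k:ℤ) - 1) + 1 : ℤ) = -(k:ℤ) - 1 by ring]
      rw [sub_smul, one_smul, neg_smul]

noncomputable def mapE {I' I : Type} (cl : I' → I) : LExp I' → LExp I :=
  Finsupp.mapDomain (Prod.map cl (id : ℤ → ℤ))

lemma mapE_E {I' I : Type} (cl : I' → I) (j : I') (n k : ℤ) :
    mapE cl (E j n k) = E (cl j) n k := by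
  simp [mapE, E, Finsupp.mapDomain_single]

lemma foldPi_single {I' I : Type} (cl : I' → I) (v : LExp I') (r : ℂ) :
    foldPi cl (AddMonoidAlgebra.single v r) = AddMonoidAlgebra.single (mapE cl v) r := by
  show AddMonoidAlgebra.mapDomain _ (AddMonoidAlgebra.single v r) = _
  rw [AddMonoidAlgebra.mapDomain_single]
  rfl

lemma foldPi_Ym {I' I : Type} (cl : I' → I) (v : LExp I') :
    foldPi cl (Ym v) = Ym (mapE cl v) := foldPi_single cl v 1

lemma mapE_Aexp {I' : Type} [Fintype I'] [DecidableEq I'] (A' : I' → I' → ℤ)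
    {I : Type} [Fintype I] [DecidableEq I] (cl : I' → I)
    (horb : ∀ i j : I', i ≠ j → cl i = cl j → A' i j = 0)
    (c : I → I → ℤ)
    (hc : ∀ (i : I') (jb : I), c jb (cl i) = ∑ j' : I', if cl j' = jb then A' j' i else 0)
    (i' : I') (n : ℤ) :
    mapE cl (AexpSL A' i' n) = AexpF c (cl i') n := by
  have hadd : ∀ v w : LExp I', mapE cl (v + w) = mapE cl v + mapE cl w :=
    fun v w => Finsupp.mapDomain_add
  rw [AexpSL, AexpF, hadd, hadd, mapE_E, mapE_E]
  congr 1
  rw [show mapE cl = ⇑(Finsupp.mapDomain.addMonoidHom (Prod.map cl (id : ℤ → ℤ))) from rfl,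
    map_sum]
  simp only [Finsupp.mapDomain.addMonoidHom_apply]
  rw [show (fun j => Finsupp.mapDomain (Prod.map cl (id : ℤ → ℤ)) (E j n (A' j i'))) =
      (fun j => mapE cl (E j n (A' j i'))) from rfl]
  simp only [mapE_E]
  -- LHS : ∑ j ∈ univ.erase i', E (cl j) n (A' j i')
  have lhs_eq : ∑ j ∈ Finset.univ.erase i', E (cl j) n (A' j i')
      = ∑ j : I', if cl j = cl i' then 0 else E (cl j) n (A' j i') := by
    rw [← Finset.sum_erase (Finset.univ) (f := fun j => if cl j = cl i' then 0 else E (cl j) n (A' j i')) (a := i') (by simp)]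
    refine Finset.sum_congr rfl fun j hj => ?_
    by_cases h : cl j = cl i'
    · have hne : j ≠ i' := (Finset.mem_erase.mp hj).1
      rw [if_pos h, horb j i' hne h]
      simp [E]
    · rw [if_neg h]
  rw [lhs_eq]
  have rhs_eq : ∑ jb ∈ Finset.univ.erase (cl i'), E jb n (c jb (cl i'))
      = ∑ j : I', if cl j = cl i' then 0 else E (cl j) n (A' j i') := by
    have step1 : ∀ jb : I, E jb n (c jb (cl i'))
        = ∑ j' : I', if cl j' = jb then E jb n (A' j' i') else 0 := by
      intro jb
      rw [E, hc, Finsupp.single_finset_sum]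
      refine Finset.sum_congr rfl fun j' _ => ?_
      split <;> simp [E]
    calc ∑ jb ∈ Finset.univ.erase (cl i'), E jb n (c jb (cl i'))
        = ∑ jb ∈ Finset.univ.erase (cl i'), ∑ j' : I',
            if cl j' = jb then E jb n (A' j' i') else 0 := by
          exact Finset.sum_congr rfl fun jb _ => step1 jb
      _ = ∑ j' : I', ∑ jb ∈ Finset.univ.erase (cl i'),
            if cl j' = jb then E jb n (A' j' i') else 0 := Finset.sum_comm
      _ = ∑ j' : I', if cl j' = cl i' then 0 else E (cl j') n (A' j' i') := by
          refine Finset.sum_congr rfl fun j' _ => ?_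
          rw [Finset.sum_ite_eq]
          by_cases h : cl j' = cl i'
          · simp [h]
          · simp [h, Finset.mem_erase]
  rw [rhs_eq]

noncomputable def Pmap {I' I : Type} (cl : I' → I) :
    (ℤ →₀ LRing I') →ₛₗ[foldPi cl] (ℤ →₀ LRing I) where
  toFun := Finsupp.mapRange (foldPi cl) (map_zero _)
  map_add' f g := by ext n; simp
  map_smul' r f := by
    ext n
    simp [Finsupp.mapRange_apply, Finsupp.smul_apply, smul_eq_mul]

lemma Pmap_single {I' I : Type} (cl : I' → I) (n : ℤ) (r : LRing I') :
    Pmap cl (Finsupp.single n r) = Finsupp.single n (foldPi cl r) := by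
  have : Pmap cl (Finsupp.single n r)
      = Finsupp.mapRange (foldPi cl) (map_zero _) (Finsupp.single n r) := rfl
  rw [this, Finsupp.mapRange_single]

noncomputable def pSemi {I' : Type} [Fintype I'] [DecidableEq I'] (A' : I' → I' → ℤ)
    {I : Type} [Fintype I] [DecidableEq I] (cl : I' → I)
    (horb : ∀ i j : I', i ≠ j → cl i = cl j → A' i j = 0)
    (c : I → I → ℤ)
    (hc : ∀ (i : I') (jb : I), c jb (cl i) = ∑ j' : I', if cl j' = jb then A' j' i else 0)
    (ib : I) (i' : I') (h : cl i' = ib) :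
    ScrMod (AexpSL A' i') →ₛₗ[foldPi cl] ScrMod (AexpF c ib) :=
  Submodule.liftQ _ (((scrRel (AexpF c ib)).mkQ).comp (Pmap cl)) (by
    rw [scrRel, Submodule.span_le]
    rintro x ⟨n, rfl⟩
    simp only [SetLike.mem_coe, LinearMap.mem_ker, LinearMap.comp_apply, map_sub,
      LinearMap.map_smulₛₗ]
    rw [Pmap_single, Pmap_single, foldPi_Ym, map_one]
    rw [mapE_Aexp A' cl horb c hc i' n, h]
    rw [Submodule.mkQ_apply, Submodule.mkQ_apply, ← Submodule.Quotient.mk_smul,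
      ← Submodule.Quotient.mk_sub]
    rw [Submodule.Quotient.mk_eq_zero]
    exact Submodule.subset_span ⟨n, rfl⟩)

lemma pSemi_ebar {I' : Type} [Fintype I'] [DecidableEq I'] (A' : I' → I' → ℤ)
    {I : Type} [Fintype I] [DecidableEq I] (cl : I' → I)
    (horb : ∀ i j : I', i ≠ j → cl i = cl j → A' i j = 0)
    (c : I → I → ℤ)
    (hc : ∀ (i : I') (jb : I), c jb (cl i) = ∑ j' : I', if cl j' = jb then A' j' i else 0)
    (ib : I) (i' : I') (h : cl i' = ib) (n : ℤ) :
    pSemi A' cl horb c hc ib i' h (ebar (AexpSL A' i') n) = ebar (AexpF c ib) n := by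
  rw [ebar, pSemi]
  rw [Submodule.liftQ_apply]
  simp only [LinearMap.comp_apply, Pmap_single, map_one, Submodule.mkQ_apply]
  rfl

set_option maxHeartbeats 2000000 in
lemma main_id {I' : Type} [Fintype I'] [DecidableEq I'] (A' : I' → I' → ℤ)
    {I : Type} [Fintype I] [DecidableEq I] (cl : I' → I)
    (horb : ∀ i j : I', i ≠ j → cl i = cl j → A' i j = 0)
    (c : I → I → ℤ)
    (hc : ∀ (i : I') (jb : I), c jb (cl i) = ∑ j' : I', if cl j' = jb then A' j' i else 0)
    (S' : ∀ i' : I', LRing I' →ₗ[ℂ] ScrMod (AexpSL A' i'))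
    (hLeib' : ∀ (i' : I') (x y : LRing I'),
      S' i' (x * y) = x • S' i' y + y • S' i' x)
    (hval' : ∀ (i' j : I') (n : ℤ),
      S' i' (Ym (E j n 1)) = if j = i' then Ym (E i' n 1) • ebar (AexpSL A' i') n else 0)
    (S : ∀ ib : I, LRing I →ₗ[ℂ] ScrMod (AexpF c ib))
    (hLeib : ∀ (ib : I) (x y : LRing I),
      S ib (x * y) = x • S ib y + y • S ib x)
    (hval : ∀ (ib jb : I) (n : ℤ),
      S ib (Ym (E jb n 1)) = if jb = ib then Ym (E ib n 1) • ebar (AexpF c ib) n else 0)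
    (ib : I) (x : LRing I') :
    S ib (foldPi cl x) =
      ∑ j ∈ (Finset.univ.filter fun i' : I' => cl i' = ib).attach,
        pSemi A' cl horb c hc ib j.1 (Finset.mem_filter.mp j.2).2 (S' j.1 x) := by
  set T := (Finset.univ.filter fun i' : I' => cl i' = ib) with hT
  set F : LRing I' → Prop := fun x => S ib (foldPi cl x) =
      ∑ j ∈ T.attach, pSemi A' cl horb c hc ib j.1 (Finset.mem_filter.mp j.2).2 (S' j.1 x)
    with hF
  have hF0 : F 0 := by simp [hF]
  have hFadd : ∀ x y, F x → F y → F (x + y) := by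
    intro x y hx hy
    simp only [hF, map_add] at hx hy ⊢
    rw [hx, hy, ← Finset.sum_add_distrib]
  have hFmul : ∀ x y, F x → F y → F (x * y) := by
    intro x y hx hy
    simp only [hF] at hx hy ⊢
    rw [map_mul, hLeib, hx, hy]
    have : ∀ j ∈ T.attach,
        pSemi A' cl horb c hc ib j.1 (Finset.mem_filter.mp j.2).2 (S' j.1 (x*y))
        = foldPi cl x • pSemi A' cl horb c hc ib j.1 (Finset.mem_filter.mp j.2).2 (S' j.1 y)
          + foldPi cl y • pSemi A' cl horb c hc ib j.1 (Finset.mem_filter.mp j.2).2 (S' j.1 x) := by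
      intro j _
      rw [hLeib' j.1, map_add, LinearMap.map_smulₛₗ, LinearMap.map_smulₛₗ]
    rw [Finset.sum_congr rfl this, Finset.sum_add_distrib, ← Finset.smul_sum, ← Finset.smul_sum]
  have hFsingle0 : ∀ r : ℂ, F (AddMonoidAlgebra.single (0 : LExp I') r) := by
    intro r
    have h1 : (AddMonoidAlgebra.single (0 : LExp I') r : LRing I') = r • 1 := by
      rw [AddMonoidAlgebra.one_def]
      rw [AddMonoidAlgebra.smul_single]
      simp
    have h1' : ∀ (J : Type), (AddMonoidAlgebra.single (0 : LExp J) r : LRing J) = r • 1 := by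
      intro J
      rw [AddMonoidAlgebra.one_def, AddMonoidAlgebra.smul_single]
      simp
    simp only [hF, foldPi_single]
    rw [show mapE cl (0 : LExp I') = 0 from Finsupp.mapDomain_zero]
    rw [h1' I, h1' I', map_smul, S_one (S ib) (hLeib ib), smul_zero]
    symm
    apply Finset.sum_eq_zero
    intro b _
    rw [map_smul, S_one (S' b.1) (hLeib' b.1), smul_zero, map_zero]
  have hQsingle : ∀ (j : I') (m k : ℤ), F (Ym (E j m k)) := by
    intro j m k
    simp only [hF, foldPi_Ym, mapE_E]
    by_cases hj : cl j = ib
    · -- diagonal case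
      have hm : j ∈ T := by simp [hT, hj]
      rw [hj]
      have hvi : S ib (Ym (E ib m 1)) = Ym (E ib m 1) • ebar (AexpF c ib) m := by
        rw [hval ib ib m, if_pos rfl]
      rw [S_Ym_pow_eq (S ib) (hLeib ib) ib m hvi k]
      rw [Finset.sum_eq_single_of_mem ⟨j, hm⟩ (Finset.mem_attach _ _)]
      · have hvi' : S' j (Ym (E j m 1)) = Ym (E j m 1) • ebar (AexpSL A' j) m := by
          rw [hval' j j m, if_pos rfl]
        rw [S_Ym_pow_eq (S' j) (hLeib' j) j m hvi' k]
        rw [map_zsmul, LinearMap.map_smulₛₗ, pSemi_ebar, foldPi_Ym, mapE_E, hj]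
      · intro b _ hb
        have hbj : j ≠ b.1 := by
          intro hcontra
          exact hb (Subtype.ext hcontra.symm)
        have hvj : S' b.1 (Ym (E j m 1)) = 0 := by
          rw [hval' b.1 j m, if_neg hbj]
        rw [S_Ym_pow_ne (S' b.1) (hLeib' b.1) m hvj k, map_zero]
    · -- off-diagonal : everything vanishes
      have hvj : S ib (Ym (E (cl j) m 1)) = 0 := by
        rw [hval ib (cl j) m, if_neg hj]
      rw [S_Ym_pow_ne (S ib) (hLeib ib) m hvj k]
      rw [Finset.sum_eq_zero]
      intro b _
      have hbj : j ≠ b.1 := by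
        intro hcontra
        apply hj
        rw [hcontra]
        exact (Finset.mem_filter.mp b.2).2
      have hvj' : S' b.1 (Ym (E j m 1)) = 0 := by
        rw [hval' b.1 j m, if_neg hbj]
      rw [S_Ym_pow_ne (S' b.1) (hLeib' b.1) m hvj' k, map_zero]
  have hQv : ∀ v : LExp I', F (Ym v) := by
    intro v
    induction v using Finsupp.induction with
    | zero => rw [Ym_zero, show (1 : LRing I') = AddMonoidAlgebra.single (0 : LExp I') 1 from
        AddMonoidAlgebra.one_def]; exact hFsingle0 1
    | single_add q k f _ _ ihf =>
        rw [Ym_add]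
        refine hFmul _ _ ?_ ihf
        obtain ⟨j, m⟩ := q
        exact hQsingle j m k
  have hFsingle : ∀ (v : LExp I') (r : ℂ), F (AddMonoidAlgebra.single v r) := by
    intro v r
    have : (AddMonoidAlgebra.single v r : LRing I')
        = AddMonoidAlgebra.single (0 : LExp I') r * Ym v := by
      rw [Ym, AddMonoidAlgebra.single_mul_single, zero_add, mul_one]
    rw [this]
    exact hFmul _ _ (hFsingle0 r) (hQv v)
  -- conclude by induction on x
  induction x using AddMonoidAlgebra.induction with
  | zero => exact hF0
  | single_add v r f _ _ ihf => exact hFadd _ _ (hFsingle v r) ihf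

set_option maxHeartbeats 1000000 in
/-- For a simply-laced folding datum `(I′, A′, σ)` with orbit set `I` and
folded matrix `c`: (a) for each orbit `ī` and each `i′ ∈ ī` there is an additive map
`p_{i′} : M′_{i′} → M_ī`, semilinear over the folding homomorphism `π` and sending `ē_n` to
`ē_n`, such that `S⁻_ī ∘ π = Σ_{i′∈ī} p_{i′} ∘ S′⁻_{i′}`; (b) consequently `π` maps
`⋂_{i∈I′} Ker S′⁻_i` into `⋂_{ī∈I} Ker S⁻_ī`. -/
theorem stmt8 {I' : Type} [Fintype I'] [DecidableEq I'] (A' : I' → I' → ℤ)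
    (σ : Equiv.Perm I')
    (hsymm : ∀ i j, A' i j = A' j i)
    (hdiag : ∀ i, A' i i = 2)
    (hoff : ∀ i j, i ≠ j → A' i j = 0 ∨ A' i j = -1)
    (hσ : ∀ i j, A' (σ i) (σ j) = A' i j)
    {I : Type} [Fintype I] [DecidableEq I] (cl : I' → I)
    (hcl_surj : Function.Surjective cl)
    (hcl : ∀ i j : I', cl i = cl j ↔ ∃ k : ℤ, (σ ^ k) i = j)
    (horb : ∀ i j : I', i ≠ j → cl i = cl j → A' i j = 0)
    (c : I → I → ℤ)
    (hc : ∀ (i : I') (jb : I), c jb (cl i) = ∑ j' : I', if cl j' = jb then A' j' i else 0)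
    (S' : ∀ i' : I', LRing I' →ₗ[ℂ] ScrMod (AexpSL A' i'))
    (hLeib' : ∀ (i' : I') (x y : LRing I'),
      S' i' (x * y) = x • S' i' y + y • S' i' x)
    (hval' : ∀ (i' j : I') (n : ℤ),
      S' i' (Ym (E j n 1)) = if j = i' then Ym (E i' n 1) • ebar (AexpSL A' i') n else 0)
    (S : ∀ ib : I, LRing I →ₗ[ℂ] ScrMod (AexpF c ib))
    (hLeib : ∀ (ib : I) (x y : LRing I),
      S ib (x * y) = x • S ib y + y • S ib x)
    (hval : ∀ (ib jb : I) (n : ℤ),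
      S ib (Ym (E jb n 1)) = if jb = ib then Ym (E ib n 1) • ebar (AexpF c ib) n else 0) :
    (∃ p : ∀ (ib : I) (i' : I'), cl i' = ib →
        (ScrMod (AexpSL A' i') →+ ScrMod (AexpF c ib)),
      (∀ (ib : I) (i' : I') (h : cl i' = ib) (x : LRing I') (mm : ScrMod (AexpSL A' i')),
        p ib i' h (x • mm) = foldPi cl x • p ib i' h mm) ∧
      (∀ (ib : I) (i' : I') (h : cl i' = ib) (n : ℤ),
        p ib i' h (ebar (AexpSL A' i') n) = ebar (AexpF c ib) n) ∧
      (∀ (ib : I) (x : LRing I'),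
        S ib (foldPi cl x) =
          ∑ j ∈ (Finset.univ.filter fun i' : I' => cl i' = ib).attach,
            p ib j.1 (Finset.mem_filter.mp j.2).2 (S' j.1 x))) ∧
    (∀ x : LRing I', (∀ i' : I', S' i' x = 0) → ∀ ib : I, S ib (foldPi cl x) = 0) := by
  refine ⟨⟨fun ib i' h => (pSemi A' cl horb c hc ib i' h).toAddMonoidHom, ?_, ?_, ?_⟩, ?_⟩
  · intro ib i' h x mm
    exact (pSemi A' cl horb c hc ib i' h).map_smulₛₗ x mm
  · intro ib i' h n
    exact pSemi_ebar A' cl horb c hc ib i' h n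
  · intro ib x
    exact main_id A' cl horb c hc S' hLeib' hval' S hLeib hval ib x
  · intro x hx ib
    rw [main_id A' cl horb c hc S' hLeib' hval' S hLeib hval ib x]
    apply Finset.sum_eq_zero
    intro b _
    rw [hx b.1, map_zero]
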